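/- Let A, B be nonempty closed subsets of a uniformly convex Banach space X with dist(A,B) = 0, and T a p-cyclic φ-contraction mapping. Then T has a unique coupled fixed point (x,y) ∈ A × B, i.e., T(x,y) = x and T(y,x) = y; moreover for any (x₀,y₀) ∈ A × B the iterates x_n = T(x_{n-1}, y_{n-1}) and y_n = T(y_{n-1}, x_{n-1}) satisfy x_n → x and y_n → y. -/
import Mathlib


open Filter Topology

/-- `setDist A B = inf {‖a - b‖ : a ∈ A, b ∈ B}`. -/
noncomputable def setDist {X : Type*} [NormedAddCommGroup X] (A B : Set X) : ℝ :=
  sInf {d : ℝ | ∃ a ∈ A, ∃ b ∈ B, d = ‖a - b‖}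


theorem cyclic_aux {Y : Type*} [NormedAddCommGroup Y] [CompleteSpace Y]
    (P Q : Set Y) (S : Y → Y) (φ : ℝ → ℝ)
    (hφmono : StrictMonoOn φ (Set.Ici 0))
    (hSP : ∀ u ∈ P, S u ∈ Q) (hSQ : ∀ u ∈ Q, S u ∈ P)
    (hS : ∀ u ∈ P, ∀ v ∈ Q, ‖S u - S v‖ ≤ ‖u - v‖ - (φ ‖u - v‖ - φ 0))
    (hPcl : IsClosed P) (hQcl : IsClosed Q)
    (z : ℕ → Y) (hz0 : z 0 ∈ P) (hzrec : ∀ n, z (n + 1) = S (z n)) :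
    ∃ w, w ∈ P ∧ w ∈ Q ∧ S w = w ∧ Tendsto z atTop (𝓝 w) := by
  have hφle : ∀ t, 0 ≤ t → φ 0 ≤ φ t := fun t ht =>
    hφmono.monotoneOn (Set.mem_Ici.2 le_rfl) (Set.mem_Ici.2 ht) ht
  have hφlt : ∀ t, 0 < t → φ 0 < φ t := fun t ht =>
    hφmono (Set.mem_Ici.2 le_rfl) (Set.mem_Ici.2 ht.le) ht
  have hmem : ∀ n, (Even n → z n ∈ P) ∧ (Odd n → z n ∈ Q) := by
    intro n
    induction n with
    | zero => exact ⟨fun _ => hz0, fun h => absurd h (by simp)⟩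
    | succ n ih =>
      constructor
      · intro h
        rw [hzrec]
        refine hSQ _ (ih.2 ?_)
        rw [Nat.odd_iff]; rw [Nat.even_iff] at h; omega
      · intro h
        rw [hzrec]
        refine hSP _ (ih.1 ?_)
        rw [Nat.even_iff]; rw [Nat.odd_iff] at h; omega
  have step : ∀ m k, (m + k) % 2 = 1 →
      ‖z (m + 1) - z (k + 1)‖ ≤ ‖z m - z k‖ - (φ ‖z m - z k‖ - φ 0) := by
    intro m k hmk
    rcases Nat.even_or_odd m with hm | hm
    · have hk : Odd k := by
        rw [Nat.odd_iff]; rw [Nat.even_iff] at hm; omega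
      rw [hzrec, hzrec]
      exact hS _ ((hmem m).1 hm) _ ((hmem k).2 hk)
    · have hk : Even k := by
        rw [Nat.even_iff]; rw [Nat.odd_iff] at hm; omega
      have h := hS _ ((hmem k).1 hk) _ ((hmem m).2 hm)
      rw [hzrec, hzrec, norm_sub_rev (S (z m)), norm_sub_rev (z m)]
      exact h
  set d : ℕ → ℝ := fun n => ‖z (n + 1) - z n‖ with hddef
  have hdnn : ∀ n, 0 ≤ d n := fun n => norm_nonneg _
  have hstepd : ∀ n, d (n + 1) ≤ d n - (φ (d n) - φ 0) := by
    intro n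
    have h := step (n + 1) n (by omega)
    simpa [hddef] using h
  have hdanti : Antitone d := by
    refine antitone_nat_of_succ_le fun n => ?_
    have := hstepd n
    have := hφle (d n) (hdnn n)
    linarith
  have dsmall : ∀ δ : ℝ, 0 < δ → ∃ N, ∀ n ≥ N, d n ≤ δ := by
    intro δ hδ
    by_contra h
    push_neg at h
    have hall : ∀ N, δ < d N := by
      intro N
      obtain ⟨n, hn, hdn⟩ := h N
      exact lt_of_lt_of_le hdn (hdanti hn)
    have hcpos : 0 < φ δ - φ 0 := sub_pos.2 (hφlt δ hδ)
    have key : ∀ n : ℕ, d n ≤ d 0 - n * (φ δ - φ 0) := by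
      intro n
      induction n with
      | zero => simp
      | succ n ih =>
        have h1 : φ δ ≤ φ (d n) :=
          hφmono.monotoneOn (Set.mem_Ici.2 hδ.le) (Set.mem_Ici.2 (hdnn n)) (hall n).le
        have h2 := hstepd n
        push_cast
        nlinarith
    obtain ⟨n, hn⟩ := exists_nat_gt (d 0 / (φ δ - φ 0))
    rw [div_lt_iff₀ hcpos] at hn
    have := key n
    have := hdnn n
    nlinarith
  have keyCauchy : ∀ ε : ℝ, 0 < ε → ∃ N, ∀ n ≥ N, ∀ k, ‖z (n + 2 * k + 1) - z n‖ ≤ ε := by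
    intro ε hε
    have hγ : 0 < φ (ε / 2) - φ 0 := sub_pos.2 (hφlt _ (by linarith))
    set γ := φ (ε / 2) - φ 0 with hγdef
    obtain ⟨N, hN⟩ := dsmall (min (ε / 4) (γ / 2)) (by positivity)
    refine ⟨N, fun n hn k => ?_⟩
    induction k with
    | zero =>
      have h := hN n hn
      have : (min (ε / 4) (γ / 2)) ≤ ε / 4 := min_le_left _ _
      have hd' : d n ≤ ε / 4 := le_trans h this
      simpa [hddef] using le_trans hd' (by linarith)
    | succ k ih =>
      set u := ‖z (n + 2 * k + 1) - z n‖ with hudef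
      have hu0 : 0 ≤ u := norm_nonneg _
      have h1 := step (n + 2 * k + 1) n (by omega)
      have e1 : n + 2 * k + 1 + 1 = n + 2 * k + 2 := by omega
      rw [e1] at h1
      -- h1 : ‖z (n+2k+2) - z (n+1)‖ ≤ u - (φ u - φ 0)
      have h2 := step (n + 2 * k + 2) (n + 1) (by omega)
      have e2 : n + 2 * k + 2 + 1 = n + 2 * k + 3 := by omega
      rw [e2] at h2
      set t1 := ‖z (n + 2 * k + 2) - z (n + 1)‖ with ht1def
      have ht10 : 0 ≤ t1 := norm_nonneg _
      have hφt1 : φ 0 ≤ φ t1 := hφle _ ht10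
      have h3 : ‖z (n + 2 * k + 3) - z (n + 2)‖ ≤ u - (φ u - φ 0) := by
        have := h2
        linarith
    -- triangle
      have tri : ‖z (n + 2 * (k + 1) + 1) - z n‖ ≤
          ‖z (n + 2 * k + 3) - z (n + 2)‖ + ‖z (n + 2) - z (n + 1)‖ + ‖z (n + 1) - z n‖ := by
        have e3 : n + 2 * (k + 1) + 1 = n + 2 * k + 3 := by omega
        rw [e3]
        have := dist_triangle4 (z (n + 2 * k + 3)) (z (n + 2)) (z (n + 1)) (z n)
        simpa [dist_eq_norm] using this
      have hdn : d n ≤ min (ε / 4) (γ / 2) := hN n hn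
      have hdn1 : d (n + 1) ≤ min (ε / 4) (γ / 2) := hN (n + 1) (by omega)
      have hdneq : ‖z (n + 1) - z n‖ = d n := rfl
      have hdn1eq : ‖z (n + 2) - z (n + 1)‖ = d (n + 1) := rfl
      have hmin1 : min (ε / 4) (γ / 2) ≤ ε / 4 := min_le_left _ _
      have hmin2 : min (ε / 4) (γ / 2) ≤ γ / 2 := min_le_right _ _
      rcases le_or_gt u (ε / 2) with hcase | hcase
      · have hφu : φ 0 ≤ φ u := hφle _ hu0
        rw [hdneq, hdn1eq] at tri
        linarith
      · have hφu : φ (ε / 2) ≤ φ u :=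
          hφmono.monotoneOn (Set.mem_Ici.2 (by linarith)) (Set.mem_Ici.2 hu0) hcase.le
        rw [hdneq, hdn1eq] at tri
        linarith
  have hcauchy : CauchySeq z := by
    rw [Metric.cauchySeq_iff']
    intro ε hε
    obtain ⟨N1, hN1⟩ := keyCauchy (ε / 4) (by linarith)
    obtain ⟨N2, hN2⟩ := dsmall (ε / 4) (by linarith)
    refine ⟨max N1 N2, fun n hn => ?_⟩
    set N := max N1 N2 with hNdef
    rw [dist_eq_norm]
    rcases eq_or_lt_of_le hn with heq | hlt
    · simp [← heq]; linarith
    · rcases Nat.even_or_odd (n - N) with he | ho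
      · obtain ⟨m, hm⟩ := he
        have hm1 : 1 ≤ m := by omega
        have hn1 : n = (N + 1) + 2 * (m - 1) + 1 := by omega
        have h1 : ‖z n - z (N + 1)‖ ≤ ε / 4 := by
          rw [hn1]
          exact hN1 (N + 1) (by omega) (m - 1)
        have h2 : ‖z (N + 1) - z N‖ ≤ ε / 4 := by
          have := hN2 N (le_max_right _ _)
          exact this
        have tri := norm_sub_le_norm_sub_add_norm_sub (z n) (z (N + 1)) (z N)
        linarith
      · obtain ⟨k, hk⟩ := ho
        have hn1 : n = N + 2 * k + 1 := by omega
        rw [hn1]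
        have := hN1 N (le_max_left _ _) k
        linarith
  obtain ⟨w, hw⟩ := cauchySeq_tendsto_of_complete hcauchy
  have heventen : Tendsto (fun m => z (2 * m)) atTop (𝓝 w) :=
    hw.comp ((strictMono_mul_left_of_pos (by norm_num : (0:ℕ) < 2)).tendsto_atTop)
  have hodd : Tendsto (fun m => z (2 * m + 1)) atTop (𝓝 w) :=
    hw.comp ((StrictMono.tendsto_atTop (fun a b h => by dsimp only; omega : StrictMono (fun m : ℕ => 2 * m + 1))))
  have hwP : w ∈ P :=
    hPcl.mem_of_tendsto heventen (Filter.Eventually.of_forall fun m => (hmem (2 * m)).1 (even_two_mul m))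
  have hwQ : w ∈ Q :=
    hQcl.mem_of_tendsto hodd (Filter.Eventually.of_forall fun m => (hmem (2 * m + 1)).2 (odd_two_mul_add_one m))
  have hSle : ∀ n, ‖z (n + 1) - S w‖ ≤ ‖z n - w‖ := by
    intro n
    rcases Nat.even_or_odd n with he | ho
    · have h := hS (z n) ((hmem n).1 he) w hwQ
      rw [hzrec]
      have := hφle ‖z n - w‖ (norm_nonneg _)
      linarith
    · have h := hS w hwP (z n) ((hmem n).2 ho)
      rw [hzrec, norm_sub_rev]
      rw [norm_sub_rev w (z n)] at h
      have := hφle ‖z n - w‖ (norm_nonneg _)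
      linarith
  have hfix : S w = w := by
    by_contra hne
    have hpos : 0 < dist (S w) w := dist_pos.2 hne
    rw [Metric.tendsto_atTop] at hw
    obtain ⟨N, hN⟩ := hw (dist (S w) w / 2) (by linarith)
    have h1 := hN N le_rfl
    have h2 := hN (N + 1) (by omega)
    have h3 := hSle N
    have tri := dist_triangle (S w) (z (N + 1)) w
    simp only [dist_eq_norm] at h1 h2 hpos tri
    rw [norm_sub_rev (S w) (z (N + 1))] at tri
    linarith
  exact ⟨w, hwP, hwQ, hfix, hw⟩

theorem stmt7 {X : Type*} [NormedAddCommGroup X] [NormedSpace ℝ X] [UniformConvexSpace X] [CompleteSpace X]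
    (A B : Set X) (hA : A.Nonempty) (hB : B.Nonempty)
    (T : X → X → X) (φ : ℝ → ℝ)
    (hφmono : StrictMonoOn φ (Set.Ici 0)) (hφpos : ∀ t ≥ (0:ℝ), 0 ≤ φ t)
    (hTB : ∀ x ∈ A, ∀ y ∈ B, T x y ∈ B)
    (hTA : ∀ x ∈ B, ∀ y ∈ A, T x y ∈ A)
    (hT : ∀ x₁ ∈ A, ∀ y₁ ∈ B, ∀ x₂ ∈ B, ∀ y₂ ∈ A,
      ‖T x₁ y₁ - T x₂ y₂‖ ≤ ‖((x₁, y₁) : X × X) - (x₂, y₂)‖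
        - φ ‖((x₁, y₁) : X × X) - (x₂, y₂)‖ + φ (setDist A B))
    (hAcl : IsClosed A) (hBcl : IsClosed B) (hd : setDist A B = 0) :
    ∃ x' y', x' ∈ A ∧ y' ∈ B ∧ T x' y' = x' ∧ T y' x' = y' ∧
      (∀ x'' y'', x'' ∈ A → y'' ∈ B → T x'' y'' = x'' → T y'' x'' = y'' →
        x'' = x' ∧ y'' = y') ∧
      (∀ x y : ℕ → X, x 0 ∈ A → y 0 ∈ B →
        (∀ n, x (n + 1) = T (x n) (y n)) → (∀ n, y (n + 1) = T (y n) (x n)) →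
        Tendsto x atTop (𝓝 x') ∧ Tendsto y atTop (𝓝 y')) := by
  rw [hd] at hT
  set S : X × X → X × X := fun p => (T p.1 p.2, T p.2 p.1) with hSdef
  have hSP : ∀ u ∈ A ×ˢ B, S u ∈ B ×ˢ A := fun u hu =>
    ⟨hTB u.1 hu.1 u.2 hu.2, hTA u.2 hu.2 u.1 hu.1⟩
  have hSQ : ∀ u ∈ B ×ˢ A, S u ∈ A ×ˢ B := fun u hu =>
    ⟨hTA u.1 hu.1 u.2 hu.2, hTB u.2 hu.2 u.1 hu.1⟩
  have hnorm : ∀ u v : X × X, ‖u - v‖ = max ‖u.1 - v.1‖ ‖u.2 - v.2‖ := by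
    intro u v
    rfl
  have hnormswap : ∀ u v : X × X, ‖((v.2, v.1) : X × X) - (u.2, u.1)‖ = ‖u - v‖ := by
    intro u v
    rw [hnorm, hnorm]
    simp only
    rw [norm_sub_rev v.2 u.2, norm_sub_rev v.1 u.1, max_comm]
  have hS : ∀ u ∈ A ×ˢ B, ∀ v ∈ B ×ˢ A, ‖S u - S v‖ ≤ ‖u - v‖ - (φ ‖u - v‖ - φ 0) := by
    intro u hu v hv
    have h1 := hT u.1 hu.1 u.2 hu.2 v.1 hv.1 v.2 hv.2
    have h2 := hT v.2 hv.2 v.1 hv.1 u.2 hu.2 u.1 hu.1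
    rw [hnormswap u v] at h2
    have e1 : ((u.1, u.2) : X × X) = u := rfl
    have e2 : ((v.1, v.2) : X × X) = v := rfl
    rw [e1, e2] at h1
    have hcalc : ‖S u - S v‖ = max ‖T u.1 u.2 - T v.1 v.2‖ ‖T u.2 u.1 - T v.2 v.1‖ := rfl
    rw [hcalc, norm_sub_rev (T u.2 u.1) (T v.2 v.1)]
    exact max_le (by linarith) (by linarith)
  have hφlt : ∀ t, 0 < t → φ 0 < φ t := fun t ht =>
    hφmono (Set.mem_Ici.2 le_rfl) (Set.mem_Ici.2 ht.le) ht
  have hφle : ∀ t, 0 ≤ t → φ 0 ≤ φ t := fun t ht =>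
    hφmono.monotoneOn (Set.mem_Ici.2 le_rfl) (Set.mem_Ici.2 ht) ht
  obtain ⟨a, ha⟩ := hA
  obtain ⟨b, hb⟩ := hB
  obtain ⟨w, hwP, hwQ, hfix, htend⟩ :=
    cyclic_aux (A ×ˢ B) (B ×ˢ A) S φ hφmono hSP hSQ hS (hAcl.prod hBcl) (hBcl.prod hAcl)
      (fun n => S^[n] (a, b)) (by simpa using Set.mk_mem_prod ha hb)
      (fun n => Function.iterate_succ_apply' S n (a, b))
  have uniq : ∀ u : X × X, u ∈ A ×ˢ B → S u = u → u = w := by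
    intro u huP hSu
    have h := hS u huP w hwQ
    rw [hSu, hfix] at h
    by_contra hne
    have hpos : 0 < ‖u - w‖ := by
      rw [norm_pos_iff]
      exact sub_ne_zero_of_ne hne
    have := hφlt _ hpos
    linarith
  refine ⟨w.1, w.2, hwP.1, hwP.2, ?_, ?_, ?_, ?_⟩
  · exact congrArg Prod.fst hfix
  · exact congrArg Prod.snd hfix
  · intro x'' y'' hx hy hfx hfy
    have : ((x'', y'') : X × X) = w := by
      refine uniq (x'', y'') (Set.mk_mem_prod hx hy) ?_
      exact Prod.ext hfx hfy
    exact ⟨congrArg Prod.fst this, congrArg Prod.snd this⟩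
  · intro x y hx0 hy0 hxrec hyrec
    obtain ⟨w₂, hw2P, hw2Q, hfix2, htend2⟩ :=
      cyclic_aux (A ×ˢ B) (B ×ˢ A) S φ hφmono hSP hSQ hS (hAcl.prod hBcl) (hBcl.prod hAcl)
        (fun n => (x n, y n)) (Set.mk_mem_prod hx0 hy0)
        (fun n => by show (x (n+1), y (n+1)) = S (x n, y n); rw [hxrec n, hyrec n])
    have hw2 : w₂ = w := uniq w₂ hw2P hfix2
    rw [hw2] at htend2
    constructor
    · exact (continuous_fst.tendsto w).comp htend2
    · exact (continuous_snd.tendsto w).comp htend2
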